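/- Fix ξ > 0 with g(ξ) > 0, a > 0, integers 0 ≤ k and m ≥ k+2, assume ρ_a is continuous in a neighborhood of ψ_a(ξ) and that the bias expansion of η̂ holds (e.g. ρ_a is (m+1)-times continuously differentiable near ψ_a(ξ)), and let (h(n))_{n∈ℕ} be positive reals with h(n) → 0 and n·h(n)^{2k+1} → ∞. Then n·h(n)^{2k+1}·Var[η̂_{k,n,h(n),a}(ξ)] converges, as n → ∞, to z_a(ξ)·‖K_k‖₂²/s_d, where z_a(ξ) = ξ^{(d-2)/2}·g(ξ)/ψ_a'(ξ) = ρ_a(ψ_a(ξ)) and ‖K_k‖₂² := ∫_ℝ K_k(w)² dw. -/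

import Mathlib

open Real Filter MeasureTheory Matrix

/-- The transformation `ψ_a(ξ) = -a + (a^{d/2} + ξ^{d/2})^{2/d}`. -/
noncomputable def psi (d : ℕ) (a : ℝ) (ξ : ℝ) : ℝ :=
  -a + (a ^ ((d : ℝ) / 2) + ξ ^ ((d : ℝ) / 2)) ^ (2 / (d : ℝ))

/-- The inverse transformation `Ψ_a(t) = ((t+a)^{d/2} - a^{d/2})^{2/d}`. -/
noncomputable def Psi (d : ℕ) (a : ℝ) (t : ℝ) : ℝ :=
  ((t + a) ^ ((d : ℝ) / 2) - a ^ ((d : ℝ) / 2)) ^ (2 / (d : ℝ))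

/-- The normalized generator `g̃(ξ) = ξ^{(d-2)/2}·g(ξ)`. -/
noncomputable def gtilde (d : ℕ) (g : ℝ → ℝ) (ξ : ℝ) : ℝ :=
  ξ ^ (((d : ℝ) - 2) / 2) * g ξ

/-- The function `z_a(ξ) = g̃(ξ)/ψ_a'(ξ)`. -/
noncomputable def za (d : ℕ) (a : ℝ) (g : ℝ → ℝ) (ξ : ℝ) : ℝ :=
  gtilde d g ξ / deriv (psi d a) ξ

/-- The function `ρ_a = z_a ∘ Ψ_a`. -/
noncomputable def rho (d : ℕ) (a : ℝ) (g : ℝ → ℝ) (t : ℝ) : ℝ :=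
  za d a g (Psi d a t)

/-- The quadratic form `(x-μ)ᵀ Σ⁻¹ (x-μ)`. -/
noncomputable def quadForm {d : ℕ} (μv : Fin d → ℝ) (S : Matrix (Fin d) (Fin d) ℝ)
    (x : Fin d → ℝ) : ℝ :=
  (x - μv) ⬝ᵥ (S⁻¹ *ᵥ (x - μv))

/-- The elliptical density `f(x) = |Σ|^{-1/2} g((x-μ)ᵀ Σ⁻¹ (x-μ))`. -/
noncomputable def ellDensity {d : ℕ} (g : ℝ → ℝ) (μv : Fin d → ℝ)
    (S : Matrix (Fin d) (Fin d) ℝ) (x : Fin d → ℝ) : ℝ :=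
  |S.det| ^ (-(1 : ℝ) / 2) * g (quadForm μv S x)

/-- The constant `s_d = π^{d/2}/Γ(d/2)`. -/
noncomputable def sd (d : ℕ) : ℝ := π ^ ((d : ℝ) / 2) / Real.Gamma ((d : ℝ) / 2)

/-- The derivative estimator `η̂_{k,n,h,a}(ξ)`. -/
noncomputable def etahat {Ω : Type*} (d k : ℕ) (a : ℝ) (Kk : ℝ → ℝ)
    (μv : Fin d → ℝ) (S : Matrix (Fin d) (Fin d) ℝ)
    (X : ℕ → Ω → (Fin d → ℝ)) (n : ℕ) (h ξ : ℝ) (ω : Ω) : ℝ :=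
  (1 / (n * h ^ (k + 1) * sd d)) *
    ∑ i ∈ Finset.range n,
      (Kk ((psi d a ξ - psi d a (quadForm μv S (X i ω))) / h) +
       Kk ((psi d a ξ + psi d a (quadForm μv S (X i ω))) / h))



noncomputable def psiD (d : ℕ) (a t : ℝ) : ℝ :=
  (2 / (d : ℝ)) * (a ^ ((d : ℝ) / 2) + t ^ ((d : ℝ) / 2)) ^ (2 / (d : ℝ) - 1) *
    (((d : ℝ) / 2) * t ^ ((d : ℝ) / 2 - 1))

section psiLemmas

variable {d : ℕ} {a : ℝ}

lemma dpos (hd : 2 ≤ d) : (0 : ℝ) < d := by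
  have h : (2:ℝ) ≤ (d:ℝ) := by exact_mod_cast hd
  linarith

lemma pq_one (hd : 2 ≤ d) : ((d : ℝ) / 2) * (2 / d) = 1 := by
  field_simp

lemma inner_pos (hd : 2 ≤ d) (ha : 0 < a) {t : ℝ} (ht : 0 ≤ t) :
    0 < a ^ ((d : ℝ) / 2) + t ^ ((d : ℝ) / 2) := by
  have h1 : 0 < a ^ ((d : ℝ) / 2) := rpow_pos_of_pos ha _
  have h2 : 0 ≤ t ^ ((d : ℝ) / 2) := rpow_nonneg ht _
  linarith

lemma rpow_p_q (hd : 2 ≤ d) {x : ℝ} (hx : 0 ≤ x) :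
    (x ^ ((d : ℝ) / 2)) ^ (2 / (d : ℝ)) = x := by
  rw [← rpow_mul hx, pq_one hd, rpow_one]

lemma rpow_q_p (hd : 2 ≤ d) {x : ℝ} (hx : 0 ≤ x) :
    (x ^ (2 / (d : ℝ))) ^ ((d : ℝ) / 2) = x := by
  rw [← rpow_mul hx]
  have : (2 / (d : ℝ)) * ((d:ℝ)/2) = 1 := by field_simp
  rw [this, rpow_one]

lemma psi_nonneg (hd : 2 ≤ d) (ha : 0 < a) {t : ℝ} (ht : 0 ≤ t) : 0 ≤ psi d a t := by
  have h1 : (a ^ ((d : ℝ) / 2)) ^ (2 / (d : ℝ)) ≤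
      (a ^ ((d : ℝ) / 2) + t ^ ((d : ℝ) / 2)) ^ (2 / (d : ℝ)) := by
    apply rpow_le_rpow (le_of_lt (rpow_pos_of_pos ha _))
    · nlinarith [rpow_nonneg ht ((d : ℝ)/2)]
    · positivity
  rw [rpow_p_q hd ha.le] at h1
  simp only [psi]; linarith

lemma psi_pos (hd : 2 ≤ d) (ha : 0 < a) {t : ℝ} (ht : 0 < t) : 0 < psi d a t := by
  have h1 : (a ^ ((d : ℝ) / 2)) ^ (2 / (d : ℝ)) <
      (a ^ ((d : ℝ) / 2) + t ^ ((d : ℝ) / 2)) ^ (2 / (d : ℝ)) := by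
    apply rpow_lt_rpow (le_of_lt (rpow_pos_of_pos ha _))
    · nlinarith [rpow_pos_of_pos ht ((d : ℝ)/2)]
    · have := dpos hd; positivity
  rw [rpow_p_q hd ha.le] at h1
  simp only [psi]; linarith

lemma Psi_psi (hd : 2 ≤ d) (ha : 0 < a) {t : ℝ} (ht : 0 ≤ t) : Psi d a (psi d a t) = t := by
  have hin := inner_pos hd ha (a := a) ht
  simp only [Psi, psi]
  have h1 : -a + (a ^ ((d : ℝ) / 2) + t ^ ((d : ℝ) / 2)) ^ (2 / (d : ℝ)) + a
      = (a ^ ((d : ℝ) / 2) + t ^ ((d : ℝ) / 2)) ^ (2 / (d : ℝ)) := by ring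
  rw [h1, rpow_q_p hd hin.le]
  simp only [add_sub_cancel_left]
  exact rpow_p_q hd ht

lemma Psi_pos (hd : 2 ≤ d) (ha : 0 < a) {u : ℝ} (hu : 0 < u) : 0 < Psi d a u := by
  have h1 : a ^ ((d : ℝ) / 2) < (u + a) ^ ((d : ℝ) / 2) := by
    apply rpow_lt_rpow ha.le (by linarith)
    have := dpos hd; positivity
  simp only [Psi]
  exact rpow_pos_of_pos (by linarith) _

lemma psi_Psi (hd : 2 ≤ d) (ha : 0 < a) {u : ℝ} (hu : 0 ≤ u) : psi d a (Psi d a u) = u := by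
  have h1 : a ^ ((d : ℝ) / 2) ≤ (u + a) ^ ((d : ℝ) / 2) := by
    apply rpow_le_rpow ha.le (by linarith)
    have := dpos hd; positivity
  simp only [Psi, psi]
  rw [rpow_q_p hd (by linarith)]
  have h2 : a ^ ((d : ℝ) / 2) + ((u + a) ^ ((d : ℝ) / 2) - a ^ ((d : ℝ) / 2))
      = (u + a) ^ ((d : ℝ) / 2) := by ring
  rw [h2, rpow_p_q hd (by linarith)]
  ring

lemma hasDerivAt_psi (hd : 2 ≤ d) (ha : 0 < a) {t : ℝ} (ht : 0 < t) :
    HasDerivAt (psi d a) (psiD d a t) t := by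
  have hin := inner_pos hd ha (a := a) ht.le
  have h1 : HasDerivAt (fun s : ℝ => a ^ ((d : ℝ) / 2) + s ^ ((d : ℝ) / 2))
      (((d : ℝ) / 2) * t ^ ((d : ℝ) / 2 - 1)) t :=
    (Real.hasDerivAt_rpow_const (Or.inl ht.ne')).const_add _
  have h2 : HasDerivAt (fun u : ℝ => u ^ (2 / (d : ℝ)))
      ((2 / (d : ℝ)) * (a ^ ((d : ℝ) / 2) + t ^ ((d : ℝ) / 2)) ^ (2 / (d : ℝ) - 1))
      (a ^ ((d : ℝ) / 2) + t ^ ((d : ℝ) / 2)) :=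
    Real.hasDerivAt_rpow_const (Or.inl hin.ne')
  have := (h2.comp t h1).const_add (-a)
  unfold psi
  simpa [psi, psiD, mul_assoc] using this

lemma psiD_pos (hd : 2 ≤ d) (ha : 0 < a) {t : ℝ} (ht : 0 < t) : 0 < psiD d a t := by
  have hin := inner_pos hd ha (a := a) ht.le
  have h0 := dpos hd
  simp only [psiD]
  have := rpow_pos_of_pos hin (2 / (d : ℝ) - 1)
  have := rpow_pos_of_pos ht ((d : ℝ) / 2 - 1)
  positivity

lemma deriv_psi (hd : 2 ≤ d) (ha : 0 < a) {t : ℝ} (ht : 0 < t) :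
    deriv (psi d a) t = psiD d a t := (hasDerivAt_psi hd ha ht).deriv

lemma injOn_psi (hd : 2 ≤ d) (ha : 0 < a) : Set.InjOn (psi d a) (Set.Ioi 0) := by
  intro s hs t ht hst
  have := Psi_psi hd ha (le_of_lt (Set.mem_Ioi.mp hs))
  rw [← this, hst, Psi_psi hd ha (le_of_lt (Set.mem_Ioi.mp ht))]

lemma psi_image (hd : 2 ≤ d) (ha : 0 < a) : psi d a '' (Set.Ioi 0) = Set.Ioi 0 := by
  ext u
  constructor
  · rintro ⟨t, ht, rfl⟩
    exact psi_pos hd ha ht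
  · intro hu
    exact ⟨Psi d a u, Psi_pos hd ha hu, psi_Psi hd ha (le_of_lt hu)⟩

lemma continuous_psi (d : ℕ) (a : ℝ) : Continuous (psi d a) := by
  apply Continuous.add continuous_const
  apply Continuous.rpow_const
  · exact Continuous.add continuous_const (continuous_id.rpow_const (fun x => Or.inr (by positivity)))
  · intro x; right; positivity

lemma continuous_Psi (d : ℕ) (a : ℝ) : Continuous (Psi d a) := by
  apply Continuous.rpow_const
  · exact Continuous.sub ((continuous_id.add continuous_const).rpow_const
      (fun x => Or.inr (by positivity))) continuous_const
  · intro x; right; positivity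

end psiLemmas


section radial

open scoped MatrixOrder

variable {d : ℕ} {μv : Fin d → ℝ} {S : Matrix (Fin d) (Fin d) ℝ}

lemma continuous_quadForm (μv : Fin d → ℝ) (S : Matrix (Fin d) (Fin d) ℝ) :
    Continuous (quadForm μv S) := by
  have h1 : Continuous fun v : Fin d → ℝ => S⁻¹ *ᵥ v := by
    have := LinearMap.continuous_on_pi (Matrix.toLin' S⁻¹)
    exact this
  have h2 : Continuous fun v : Fin d → ℝ => v ⬝ᵥ (S⁻¹ *ᵥ v) := by
    have heq : (fun v : Fin d → ℝ => v ⬝ᵥ (S⁻¹ *ᵥ v))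
        = fun v => ∑ i, v i * (S⁻¹ *ᵥ v) i := rfl
    rw [heq]
    exact continuous_finset_sum _ fun i _ =>
      (continuous_apply i).mul ((continuous_apply i).comp h1)
  exact h2.comp (continuous_id.sub continuous_const)

lemma quadForm_nonneg (hS : S.PosDef) (x : Fin d → ℝ) : 0 ≤ quadForm μv S x := by
  have h := (hS.inv.posSemidef).dotProduct_mulVec_nonneg (x - μv)
  simpa [quadForm, dotProduct] using h

lemma quadForm_shift (hS : S.PosDef) (y : Fin d → ℝ) :
    quadForm μv S (μv + CFC.sqrt S *ᵥ y) = y ⬝ᵥ y := by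
  set A := CFC.sqrt S with hA
  have hAA : A * A = S := CFC.sqrt_mul_sqrt_self S hS.posSemidef.nonneg
  have hherm : Aᵀ = A := by
    have := (Matrix.nonneg_iff_posSemidef.mp (CFC.sqrt_nonneg S)).1
    rwa [Matrix.IsHermitian, conjTranspose_eq_transpose_of_trivial] at this
  have hdetS : 0 < S.det := hS.det_pos
  have hdet2 : A.det * A.det = S.det := by rw [← det_mul, hAA]
  have hdetA : IsUnit A.det := by
    refine isUnit_iff_ne_zero.mpr fun h0 => ?_
    rw [h0, zero_mul] at hdet2; exact hdetS.ne' hdet2.symm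
  have hSinv : S⁻¹ = A⁻¹ * A⁻¹ := by rw [← hAA, Matrix.mul_inv_rev]
  have hxy : μv + A *ᵥ y - μv = A *ᵥ y := by abel
  simp only [quadForm, hxy]
  rw [Matrix.mulVec_mulVec, Matrix.dotProduct_mulVec, Matrix.vecMul_mulVec]
  have h1 : Aᵀ * (S⁻¹ * A) = 1 := by
    rw [hherm, hSinv, Matrix.mul_assoc, Matrix.nonsing_inv_mul A hdetA,
      Matrix.mul_one, Matrix.mul_nonsing_inv A hdetA]
  rw [h1, Matrix.vecMul_one]

lemma radial_integral (hd : 2 ≤ d) (g : ℝ → ℝ) (hgm : Measurable g)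
    (μv : Fin d → ℝ) (hS : S.PosDef) (F : ℝ → ℝ) (hF : Measurable F) :
    ∫ x : Fin d → ℝ, F (quadForm μv S x) * ellDensity g μv S x =
      sd d * ∫ t in Set.Ioi (0:ℝ), F t * gtilde d g t := by
  classical
  haveI : NeZero d := ⟨by omega⟩
  set A := CFC.sqrt S with hA
  have hAA : A * A = S := CFC.sqrt_mul_sqrt_self S hS.posSemidef.nonneg
  have hdetS : 0 < S.det := hS.det_pos
  have hdet2 : A.det * A.det = S.det := by rw [← det_mul, hAA]
  have hdetA : A.det ≠ 0 := by
    intro h0; rw [h0, zero_mul] at hdet2; exact hdetS.ne' hdet2.symm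
  -- functions
  set c0 : ℝ := |S.det| ^ (-(1:ℝ)/2) with hc0
  set G : ℝ → ℝ := fun t => F t * g t with hG
  set Φ : (Fin d → ℝ) → ℝ := fun x => F (quadForm μv S x) * ellDensity g μv S x with hΦ
  have hqc : Continuous (quadForm μv S) := continuous_quadForm μv S
  have hΦm : Measurable Φ := by
    apply Measurable.mul (hF.comp hqc.measurable)
    exact ((hgm.comp hqc.measurable).const_mul _)
  -- affine change of variables
  set T : (Fin d → ℝ) → (Fin d → ℝ) := fun y => μv + A *ᵥ y with hT
  have hlinc : Continuous fun y : Fin d → ℝ => A *ᵥ y := by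
    have := LinearMap.continuous_on_pi (Matrix.toLin' A)
    exact this
  have hTm : Measurable T := (continuous_const.add hlinc).measurable
  have hmapT : Measure.map T volume = ENNReal.ofReal (|A.det|⁻¹) • volume := by
    have hTc : T = (fun x => μv + x) ∘ (Matrix.toLin' A) := by
      funext y; simp [hT, Matrix.toLin'_apply]
    have hadd : Measurable fun x : Fin d → ℝ => μv + x := by
      exact measurable_id.const_add μv
    rw [hTc, ← Measure.map_map hadd
      (LinearMap.continuous_on_pi (Matrix.toLin' A)).measurable]
    rw [Real.map_matrix_volume_pi_eq_smul_volume_pi hdetA, Measure.map_smul]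
    rw [show (fun x : Fin d → ℝ => μv + x) = (μv + ·) from rfl]
    rw [(measurePreserving_add_left volume μv).map_eq, abs_inv]
  have step1 : ∫ x, Φ x = |A.det| * ∫ y, Φ (T y) := by
    have h1 : ∫ y, Φ (T y) = ∫ x, Φ x ∂(Measure.map T volume) :=
      (integral_map hTm.aemeasurable hΦm.aestronglyMeasurable).symm
    rw [h1, hmapT, integral_smul_measure, ENNReal.toReal_ofReal (by positivity),
      smul_eq_mul, ← mul_assoc, mul_inv_cancel₀ (by positivity), one_mul]
  have hΦT : ∀ y, Φ (T y) = c0 * G (y ⬝ᵥ y) := by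
    intro y
    have hq : quadForm μv S (μv + A *ᵥ y) = y ⬝ᵥ y := quadForm_shift (μv := μv) hS y
    simp only [hΦ, hT, ellDensity, hq, hG, hc0]
    ring
  have step2 : ∫ y, Φ (T y) = c0 * ∫ y : Fin d → ℝ, G (y ⬝ᵥ y) := by
    simp only [hΦT, ← smul_eq_mul]
    exact integral_smul c0 _
  haveI : Nonempty (Fin d) := ⟨⟨0, by omega⟩⟩
  have step3 : ∫ y : Fin d → ℝ, G (y ⬝ᵥ y) = ∫ z : EuclideanSpace ℝ (Fin d), G (‖z‖ ^ 2) := by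
    rw [← MeasurePreserving.integral_comp (EuclideanSpace.volume_preserving_symm_measurableEquiv_toLp (Fin d))
      (MeasurableEquiv.measurableEmbedding _) (fun y => G (y ⬝ᵥ y))]
    refine integral_congr_ae (Filter.Eventually.of_forall fun z => ?_)
    have hnorm : ‖z‖ ^ 2 = ∑ i, z i ^ 2 := by
      rw [EuclideanSpace.norm_eq, Real.sq_sqrt (by positivity)]
      simp [sq_abs]
    have happ : ∀ i, ((MeasurableEquiv.toLp 2 (Fin d → ℝ)).symm z) i = z i := fun i => rfl
    simp only [dotProduct, happ, hnorm]
    congr 1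
    exact Finset.sum_congr rfl fun i _ => (sq (z i)).symm ▸ by ring
  haveI : Nontrivial (EuclideanSpace ℝ (Fin d)) := by infer_instance
  have step4 : ∫ z : EuclideanSpace ℝ (Fin d), G (‖z‖ ^ 2)
      = (d : ℝ) * ((volume (Metric.ball (0 : EuclideanSpace ℝ (Fin d)) 1)).toReal) *
        ∫ r in Set.Ioi (0:ℝ), r ^ (d - 1) • G (r ^ 2) := by
    have hpol := MeasureTheory.integral_fun_norm_addHaar
      (μ := (volume : Measure (EuclideanSpace ℝ (Fin d)))) (fun r => G (r ^ 2))
    rw [finrank_euclideanSpace_fin] at hpol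
    simpa [nsmul_eq_mul, smul_eq_mul, mul_assoc, measureReal_def] using hpol
  have hΓpos : 0 < Real.Gamma ((d:ℝ)/2 + 1) := Real.Gamma_pos_of_pos (by positivity)
  have hΓpos' : 0 < Real.Gamma ((d:ℝ)/2) := Real.Gamma_pos_of_pos (by positivity)
  have hball : (volume (Metric.ball (0 : EuclideanSpace ℝ (Fin d)) 1)).toReal
      = Real.sqrt π ^ d / Real.Gamma ((d:ℝ)/2 + 1) := by
    rw [EuclideanSpace.volume_ball]
    simp only [Fintype.card_fin, ENNReal.ofReal_one, one_pow, one_mul]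
    exact ENNReal.toReal_ofReal (by positivity)
  have step5s : (2:ℝ) • (∫ r in Set.Ioi (0:ℝ), r ^ (d - 1) • G (r ^ 2))
      = ∫ t in Set.Ioi (0:ℝ), t ^ (((d:ℝ) - 2)/2) * G t := by
    have hsub := integral_comp_rpow_Ioi (fun t => t ^ (((d:ℝ) - 2)/2) • G t) (p := (2:ℝ))
      two_ne_zero
    rw [show (∫ t in Set.Ioi (0:ℝ), t ^ (((d:ℝ) - 2)/2) * G t)
        = ∫ t in Set.Ioi (0:ℝ), t ^ (((d:ℝ) - 2)/2) • G t from rfl, ← hsub, ← integral_smul]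
    refine setIntegral_congr_fun measurableSet_Ioi fun x hx => ?_
    have hx0 : (0:ℝ) < x := hx
    have h2 : x ^ (2:ℝ) = x ^ (2:ℕ) := by
      rw [← Real.rpow_natCast x 2]; norm_num
    have h3 : (x ^ (2:ℝ)) ^ (((d:ℝ) - 2)/2) = x ^ ((d:ℝ) - 2) := by
      rw [← Real.rpow_mul hx0.le]
      congr 1; ring
    have h4 : x ^ ((d:ℝ) - 2) = x ^ (d - 2 : ℕ) := by
      rw [← Real.rpow_natCast x (d-2)]
      congr 1
      push_cast [Nat.cast_sub hd]
      ring
    simp only [smul_eq_mul]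
    rw [h3, h4, h2]
    have h5 : x ^ (d - 1) = x * x ^ (d - 2 : ℕ) := by
      have hd1 : d - 1 = (d - 2) + 1 := by omega
      rw [hd1, pow_succ]; ring
    rw [h5]
    have habs : |(2:ℝ)| = 2 := by norm_num
    rw [habs]
    have h6 : x ^ ((2:ℝ) - 1) = x := by
      norm_num
    rw [h6]; ring
  have hconst : |A.det| * c0 = 1 := by
    have habs2 : |S.det| = |A.det| ^ (2:ℕ) := by
      rw [← hdet2, abs_mul, sq]
    rw [hc0, habs2, ← Real.rpow_natCast |A.det| 2, ← Real.rpow_mul (abs_nonneg _)]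
    have : ((2:ℕ):ℝ) * (-(1:ℝ)/2) = -1 := by norm_num
    rw [this, Real.rpow_neg_one, mul_inv_cancel₀ (abs_ne_zero.mpr hdetA)]
  have hsqrtpi : Real.sqrt π ^ d = π ^ ((d:ℝ)/2) := by
    rw [Real.sqrt_eq_rpow, ← Real.rpow_natCast (π ^ ((1:ℝ)/2)) d, ← Real.rpow_mul pi_pos.le]
    congr 1; ring
  have hsd : (d:ℝ) * (Real.sqrt π ^ d / Real.Gamma ((d:ℝ)/2 + 1)) * (2:ℝ)⁻¹ = sd d := by
    rw [hsqrtpi, Real.Gamma_add_one (by positivity), sd]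
    field_simp
  have hIG : ∫ t in Set.Ioi (0:ℝ), t ^ (((d:ℝ) - 2)/2) * G t
      = ∫ t in Set.Ioi (0:ℝ), F t * gtilde d g t := by
    refine setIntegral_congr_fun measurableSet_Ioi fun t _ => ?_
    simp only [hG, gtilde]; ring
  have step5 : ∫ r in Set.Ioi (0:ℝ), r ^ (d - 1) • G (r ^ 2)
      = (2:ℝ)⁻¹ * ∫ t in Set.Ioi (0:ℝ), t ^ (((d:ℝ) - 2)/2) * G t := by
    rw [← step5s, smul_eq_mul]; ring
  rw [show (∫ x : Fin d → ℝ, F (quadForm μv S x) * ellDensity g μv S x) = ∫ x, Φ x from rfl,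
    step1, step2, step3, step4, step5, hball]
  linear_combination ((d:ℝ) * (Real.sqrt π ^ d / Real.Gamma ((d:ℝ)/2 + 1)) * 2⁻¹ *
      (∫ t in Set.Ioi (0:ℝ), t ^ (((d:ℝ) - 2)/2) * G t)) * hconst +
    (∫ t in Set.Ioi (0:ℝ), t ^ (((d:ℝ) - 2)/2) * G t) * hsd + sd d * hIG

end radial


section subst

variable {d : ℕ} {a : ℝ}

/-- substitution u = psi t -/
lemma psi_subst (hd : 2 ≤ d) (ha : 0 < a) (g : ℝ → ℝ) (F : ℝ → ℝ) :
    ∫ u in Set.Ioi (0:ℝ), F u * rho d a g u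
      = ∫ t in Set.Ioi (0:ℝ), F (psi d a t) * gtilde d g t := by
  have himg := psi_image hd ha (a := a)
  have h1 : ∫ u in Set.Ioi (0:ℝ), F u * rho d a g u
      = ∫ u in psi d a '' Set.Ioi 0, F u * rho d a g u := by rw [himg]
  rw [h1, integral_image_eq_integral_abs_deriv_smul measurableSet_Ioi
    (fun t ht => (hasDerivAt_psi hd ha (Set.mem_Ioi.mp ht)).hasDerivWithinAt)
    (injOn_psi hd ha) (fun u => F u * rho d a g u)]
  refine setIntegral_congr_fun measurableSet_Ioi fun t ht => ?_
  have ht0 : (0:ℝ) < t := ht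
  have hrho : rho d a g (psi d a t) = gtilde d g t / psiD d a t := by
    rw [rho, Psi_psi hd ha ht0.le, za, deriv_psi hd ha ht0]
  rw [hrho, smul_eq_mul, abs_of_pos (psiD_pos hd ha ht0)]
  field_simp [(psiD_pos hd ha ht0).ne']

/-- affine substitution u = u0 - c*w over Ioi 0 with indicator -/
lemma comp_affine (Φ : ℝ → ℝ) {c : ℝ} (hc : 0 < c) (u0 : ℝ) (ρf : ℝ → ℝ) :
    ∫ u in Set.Ioi (0:ℝ), Φ ((u0 - u)/c) * ρf u
      = c * ∫ w : ℝ, Φ w * (Set.indicator (Set.Ioi 0) ρf (u0 - c*w)) := by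
  have himg : (fun w : ℝ => u0 - c*w) '' Set.univ = Set.univ := by
    apply Set.image_univ_of_surjective
    intro u; exact ⟨(u0 - u)/c, by field_simp; ring⟩
  have hinj : Set.InjOn (fun w : ℝ => u0 - c*w) Set.univ := by
    intro x _ y _ hxy
    simp only at hxy
    have : c * x = c * y := by linarith
    exact mul_left_cancel₀ hc.ne' this
  have hder : ∀ x ∈ Set.univ, HasDerivWithinAt (fun w : ℝ => u0 - c*w) (-c) Set.univ x := by
    intro x _
    have := (((hasDerivAt_id x).const_mul c).const_sub u0).hasDerivWithinAt
      (s := Set.univ)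
    simpa using this
  have key := integral_image_eq_integral_abs_deriv_smul MeasurableSet.univ hder hinj
    (Set.indicator (Set.Ioi 0) (fun u => Φ ((u0 - u)/c) * ρf u))
  rw [himg] at key
  rw [← integral_indicator measurableSet_Ioi]
  rw [show (∫ u : ℝ, Set.indicator (Set.Ioi 0) (fun u => Φ ((u0 - u)/c) * ρf u) u)
      = ∫ u in Set.univ, Set.indicator (Set.Ioi 0) (fun u => Φ ((u0 - u)/c) * ρf u) u by
    rw [Measure.restrict_univ]]
  rw [key, Measure.restrict_univ, ← smul_eq_mul, ← integral_smul]
  refine integral_congr_ae (Filter.Eventually.of_forall fun w => ?_)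
  rw [abs_of_neg (by linarith : -c < 0), neg_neg]
  simp only [smul_eq_mul]
  by_cases hmem : u0 - c*w ∈ Set.Ioi (0:ℝ)
  · rw [Set.indicator_of_mem hmem, Set.indicator_of_mem hmem]
    have : (u0 - (u0 - c*w))/c = w := by field_simp; ring
    rw [this]
  · rw [Set.indicator_of_notMem hmem, Set.indicator_of_notMem hmem]
    ring

end subst

section limits

lemma integrable_bdd_compact {Φ : ℝ → ℝ} (hm : Measurable Φ) {M : ℝ}
    (hb : ∀ x, |Φ x| ≤ M) (hs : HasCompactSupport Φ) : Integrable Φ := by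
  obtain ⟨R, hRs⟩ := hs.isBounded.subset_closedBall 0
  have hg : Integrable (Set.indicator (Metric.closedBall (0:ℝ) R) (fun _ => M)) :=
    (integrableOn_const measure_closedBall_lt_top.ne).integrable_indicator
      measurableSet_closedBall
  refine hg.mono' hm.aestronglyMeasurable (Filter.Eventually.of_forall fun x => ?_)
  by_cases hx : x ∈ tsupport Φ
  · rw [Set.indicator_of_mem (hRs hx)]
    simpa using hb x
  · rw [image_eq_zero_of_notMem_tsupport hx]
    simp only [norm_zero]
    by_cases hx2 : x ∈ Metric.closedBall (0:ℝ) R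
    · rw [Set.indicator_of_mem hx2]
      exact le_trans (abs_nonneg (Φ x)) (hb x)
    · rw [Set.indicator_of_notMem hx2]

lemma kernel_limit {u0 : ℝ} (hu0 : 0 < u0) {ρf : ℝ → ℝ} (hρm : Measurable ρf)
    (hρc : ContinuousAt ρf u0) (Φ : ℝ → ℝ) (hΦm : Measurable Φ) {M : ℝ}
    (hΦb : ∀ x, |Φ x| ≤ M) (hΦs : HasCompactSupport Φ)
    {h : ℕ → ℝ} (hh0 : Tendsto h atTop (nhds 0)) :
    Tendsto (fun n => ∫ w : ℝ, Φ w * (Set.indicator (Set.Ioi 0) ρf (u0 - h n * w)))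
      atTop (nhds ((∫ w : ℝ, Φ w) * ρf u0)) := by
  set ρb := Set.indicator (Set.Ioi (0:ℝ)) ρf with hρb
  have hmem : Set.Ioi (0:ℝ) ∈ nhds u0 := isOpen_Ioi.mem_nhds hu0
  have hEq : ρb =ᶠ[nhds u0] ρf :=
    Filter.eventually_of_mem hmem fun x hx => Set.indicator_of_mem hx ρf
  have hρbc : ContinuousAt ρb u0 := (continuousAt_congr hEq).mpr hρc
  have hρbu0 : ρb u0 = ρf u0 := Set.indicator_of_mem hu0 ρf
  -- bound near u0
  obtain ⟨δ, hδ0, hδ⟩ := Metric.continuousAt_iff.mp hρbc 1 one_pos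
  set C : ℝ := |ρb u0| + 1 with hC
  have hCb : ∀ x : ℝ, dist x u0 < δ → |ρb x| ≤ C := by
    intro x hx
    have := hδ hx
    rw [Real.dist_eq] at this
    have := abs_sub_abs_le_abs_sub (ρb x) (ρb u0)
    simp only [hC]
    linarith
  -- support radius
  obtain ⟨R0, hR0s⟩ := hΦs.isBounded.subset_closedBall 0
  set R : ℝ := max R0 1 with hR
  have hR1 : 0 < R := lt_of_lt_of_le one_pos (le_max_right _ _)
  have hRs : tsupport Φ ⊆ Metric.closedBall 0 R :=
    hR0s.trans (Metric.closedBall_subset_closedBall (le_max_left _ _))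
  have hΦint : Integrable Φ := integrable_bdd_compact hΦm hΦb hΦs
  have hmeas : ∀ n : ℕ, AEStronglyMeasurable (fun w => Φ w * ρb (u0 - h n * w)) volume := by
    intro n
    exact (hΦm.mul ((hρm.indicator measurableSet_Ioi).comp
      (measurable_const.sub (measurable_const.mul measurable_id)))).aestronglyMeasurable
  have hlim' : Tendsto (fun n => ∫ w : ℝ, Φ w * ρb (u0 - h n * w)) atTop
      (nhds (∫ w : ℝ, Φ w * ρf u0)) := by
    apply tendsto_integral_filter_of_dominated_convergence (fun w => |Φ w| * C)
    · exact Filter.Eventually.of_forall hmeas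
    · -- eventual bound
      have hev : ∀ᶠ n in atTop, |h n| < δ / R := by
        have := Metric.tendsto_nhds.mp hh0 (δ / R) (by positivity)
        simpa [Real.dist_eq] using this
      refine hev.mono fun n hn => Filter.Eventually.of_forall fun w => ?_
      by_cases hw : Φ w = 0
      · simp only [hw, zero_mul, abs_zero, norm_zero]
        positivity
      · have hwsupp : w ∈ tsupport Φ := subset_closure (by simpa [Function.mem_support] using hw)
        have hwR : |w| ≤ R := by
          have := hRs hwsupp
          simpa [Metric.mem_closedBall, Real.dist_eq] using this
        have hdist : dist (u0 - h n * w) u0 < δ := by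
          rw [Real.dist_eq]
          have h1 : |u0 - h n * w - u0| = |h n| * |w| := by
            rw [show u0 - h n * w - u0 = -(h n * w) by ring, abs_neg, abs_mul]
          rw [h1]
          calc |h n| * |w| ≤ |h n| * R := by
                exact mul_le_mul_of_nonneg_left hwR (abs_nonneg _)
            _ < (δ / R) * R := by
                exact mul_lt_mul_of_pos_right hn hR1
            _ = δ := by field_simp
        rw [norm_mul, Real.norm_eq_abs, Real.norm_eq_abs]
        exact mul_le_mul_of_nonneg_left (hCb _ hdist) (abs_nonneg _)
    · exact hΦint.abs.mul_const C
    · refine Filter.Eventually.of_forall fun w => ?_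
      have h1 : Tendsto (fun n => u0 - h n * w) atTop (nhds u0) := by
        have h2 : Tendsto (fun n => h n * w) atTop (nhds 0) := by
          simpa using hh0.mul_const w
        simpa using tendsto_const_nhds.sub h2
      have h3 : Tendsto (fun n => ρb (u0 - h n * w)) atTop (nhds (ρb u0)) :=
        hρbc.tendsto.comp h1
      rw [hρbu0] at h3
      exact tendsto_const_nhds.mul h3
  rw [show (∫ w : ℝ, Φ w * ρf u0) = (∫ w : ℝ, Φ w) * ρf u0 from
    integral_mul_const (ρf u0) Φ] at hlim'
  exact hlim'

end limits


/-- asymptotic variance of the derivative estimator: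
`n·h(n)^{2k+1}·Var[η̂_{k,n,h(n),a}(ξ)] → z_a(ξ)·‖K_k‖₂²/s_d`. -/
theorem etahat_variance_asymptotics (d : ℕ) (hd : 2 ≤ d) (a : ℝ) (ha : 0 < a)
    (g : ℝ → ℝ) (hgm : Measurable g) (hg0 : ∀ x, 0 ≤ g x)
    (μv : Fin d → ℝ) (S : Matrix (Fin d) (Fin d) ℝ) (hS : S.PosDef)
    {Ω : Type*} [MeasurableSpace Ω] (P : Measure Ω) [IsProbabilityMeasure P]
    (X : ℕ → Ω → (Fin d → ℝ)) (hXm : ∀ i, Measurable (X i))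
    (hindep : ProbabilityTheory.iIndepFun X P)
    (hident : ∀ i, Measure.map (X i) P =
      volume.withDensity (fun x => ENNReal.ofReal (ellDensity g μv S x)))
    (k m : ℕ) (hkm : k + 2 ≤ m)
    (Kk : ℝ → ℝ) (hKm : Measurable Kk) (hKb : ∃ M : ℝ, ∀ x, |Kk x| ≤ M)
    (hKsupp : HasCompactSupport Kk)
    (hord0 : ∀ j : ℕ, j < m → j ≠ k → ∫ x : ℝ, Kk x * x ^ j = 0)
    (hordk : ∫ x : ℝ, Kk x * x ^ k = (-1 : ℝ) ^ k * (Nat.factorial k : ℝ))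
    (μm : ℝ) (hordm : ∫ x : ℝ, Kk x * x ^ m = μm) (hμm : μm ≠ 0)
    (ξ : ℝ) (hξ : 0 < ξ) (hgpos : 0 < g ξ)
    (hρ : ContDiffAt ℝ (↑(m + 1)) (rho d a g) (psi d a ξ))
    (h : ℕ → ℝ) (hhpos : ∀ n, 0 < h n) (hh0 : Tendsto h atTop (nhds 0))
    (hnh : Tendsto (fun n : ℕ => (n : ℝ) * h n ^ (2 * k + 1)) atTop atTop) :
    Tendsto (fun n : ℕ =>
        (n : ℝ) * h n ^ (2 * k + 1) *
          ProbabilityTheory.variance (etahat d k a Kk μv S X n (h n) ξ) P)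
      atTop (nhds (za d a g ξ * (∫ w : ℝ, (Kk w) ^ 2) / sd d)) := by
  classical
  obtain ⟨M, hM⟩ := hKb
  have hM0 : 0 ≤ M := le_trans (abs_nonneg _) (hM 0)
  have hu0 : 0 < psi d a ξ := psi_pos hd ha hξ
  set u0 : ℝ := psi d a ξ with hu0def
  have hsd : 0 < sd d := by
    have hdp := dpos hd
    have h1 : 0 < Real.Gamma ((d:ℝ)/2) := Real.Gamma_pos_of_pos (by positivity)
    have h2 : 0 < π ^ ((d:ℝ)/2) := rpow_pos_of_pos pi_pos _
    exact div_pos h2 h1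
  have hθ : (0:ℝ) ≤ ((d:ℝ) - 2)/2 := by
    have h1 : (2:ℝ) ≤ (d:ℝ) := by exact_mod_cast hd
    linarith
  have hgt : Measurable (gtilde d g) := ((continuous_rpow_const hθ).measurable).mul hgm
  have hzam : Measurable (za d a g) := hgt.div (measurable_deriv (psi d a))
  have hρm : Measurable (rho d a g) := hzam.comp (continuous_Psi d a).measurable
  have hρc : ContinuousAt (rho d a g) u0 := hρ.continuousAt
  have hρu0 : rho d a g u0 = za d a g ξ := by
    rw [rho, hu0def, Psi_psi hd ha hξ.le]
  have hqm : Measurable (quadForm μv S) := (continuous_quadForm μv S).measurable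
  have hpsim : Measurable (psi d a) := (continuous_psi d a).measurable
  -- support radius
  obtain ⟨R0, hR0s⟩ := hKsupp.isBounded.subset_closedBall 0
  set R : ℝ := max R0 1 with hRdef
  have hR1 : (0:ℝ) < R := lt_of_lt_of_le one_pos (le_max_right _ _)
  have hRs : tsupport Kk ⊆ Metric.closedBall 0 R :=
    hR0s.trans (Metric.closedBall_subset_closedBall (le_max_left _ _))
  have hKout : ∀ y : ℝ, R < |y| → Kk y = 0 := by
    intro y hy
    apply image_eq_zero_of_notMem_tsupport
    intro hmem
    have h1 := hRs hmem
    rw [Metric.mem_closedBall, Real.dist_eq, sub_zero] at h1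
    linarith
  -- limit quantities
  set ρb := Set.indicator (Set.Ioi (0:ℝ)) (rho d a g) with hρbdef
  set B0 : ℕ → ℝ := fun n => ∫ w : ℝ, Kk w * ρb (u0 - h n * w) with hB0
  set B1 : ℕ → ℝ := fun n => ∫ w : ℝ, (Kk w)^2 * ρb (u0 - h n * w) with hB1
  have hK2eq : (fun w : ℝ => (Kk w)^2) = fun w => Kk w * Kk w := by
    funext w; ring
  have hK2m : Measurable (fun w : ℝ => (Kk w)^2) := by rw [hK2eq]; exact hKm.mul hKm
  have hK2b : ∀ x : ℝ, |(Kk x)^2| ≤ M^2 := by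
    intro x
    rw [abs_pow]
    exact pow_le_pow_left₀ (abs_nonneg _) (hM x) 2
  have hK2s : HasCompactSupport (fun w : ℝ => (Kk w)^2) := by
    rw [hK2eq]
    exact hKsupp.mul_right
  have hB1lim : Tendsto B1 atTop (nhds ((∫ w : ℝ, (Kk w)^2) * rho d a g u0)) :=
    kernel_limit hu0 hρm hρc _ hK2m hK2b hK2s hh0
  have hB0lim : Tendsto B0 atTop (nhds ((∫ w : ℝ, Kk w) * rho d a g u0)) :=
    kernel_limit hu0 hρm hρc _ hKm hM hKsupp hh0
  have hmain : Tendsto (fun n => B1 n / sd d - h n * (B0 n)^2) atTop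
      (nhds (za d a g ξ * (∫ w : ℝ, (Kk w)^2) / sd d)) := by
    have h1 := hB1lim.div_const (sd d)
    have h2 : Tendsto (fun n => h n * (B0 n)^2) atTop (nhds 0) := by
      have h3 := hh0.mul (hB0lim.pow 2)
      simpa using h3
    have h4 := h1.sub h2
    have h5 : (∫ w : ℝ, (Kk w)^2) * rho d a g u0 / sd d - 0
        = za d a g ξ * (∫ w : ℝ, (Kk w)^2) / sd d := by
      rw [hρu0]; ring
    rwa [h5] at h4
  refine Tendsto.congr' ?_ hmain
  -- eventual equality
  have hev1 : ∀ᶠ n in atTop, h n * R < u0 := by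
    have h1 := Metric.tendsto_nhds.mp hh0 (u0 / R) (by positivity)
    refine h1.mono fun n hn => ?_
    rw [Real.dist_eq, sub_zero, abs_of_pos (hhpos n)] at hn
    calc h n * R < (u0 / R) * R := mul_lt_mul_of_pos_right hn hR1
    _ = u0 := by field_simp
  filter_upwards [hev1, eventually_ge_atTop 1] with n hn1 hn2
  have hhp : 0 < h n := hhpos n
  have hn0 : (0:ℝ) < (n:ℝ) := by exact_mod_cast Nat.lt_of_lt_of_le Nat.zero_lt_one hn2
  -- the single-sided kernel function
  set F1 : ℝ → ℝ := fun t => Kk ((u0 - psi d a t)/(h n)) with hF1def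
  have hF1m : Measurable F1 :=
    hKm.comp ((measurable_const.sub hpsim).div_const _)
  have hmirror : ∀ x : Fin d → ℝ, Kk ((u0 + psi d a (quadForm μv S x))/(h n)) = 0 := by
    intro x
    apply hKout
    have hq0 : 0 ≤ quadForm μv S x := quadForm_nonneg hS x
    have hψ0 : 0 ≤ psi d a (quadForm μv S x) := psi_nonneg hd ha hq0
    have h2 : R < u0 / h n := by
      rw [lt_div_iff₀ hhp]
      linarith [hn1]
    have h3 : u0 / h n ≤ (u0 + psi d a (quadForm μv S x))/(h n) := by
      apply div_le_div_of_nonneg_right ?_ ?_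
      all_goals first | linarith | exact hhp
    calc R < u0 / h n := h2
    _ ≤ (u0 + psi d a (quadForm μv S x))/(h n) := h3
    _ ≤ |(u0 + psi d a (quadForm μv S x))/(h n)| := le_abs_self _
  have hetahat : etahat d k a Kk μv S X n (h n) ξ
      = fun ω => (1/((n:ℝ) * h n ^(k+1) * sd d)) *
          ∑ i ∈ Finset.range n, F1 (quadForm μv S (X i ω)) := by
    funext ω
    rw [etahat]
    congr 1
    refine Finset.sum_congr rfl fun i _ => ?_
    rw [hmirror, add_zero]
  -- measurability and boundedness of the summands
  have hφm : Measurable fun x : Fin d → ℝ => F1 (quadForm μv S x) := hF1m.comp hqm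
  have hmem2 : ∀ i, MemLp (fun ω => F1 (quadForm μv S (X i ω))) 2 P := by
    intro i
    refine MemLp.of_bound ((hφm.comp (hXm i)).aestronglyMeasurable) M
      (Filter.Eventually.of_forall fun ω => ?_)
    rw [Real.norm_eq_abs]
    exact hM _
  -- moment transfer to Lebesgue integrals
  have hellnn : ∀ x, 0 ≤ ellDensity g μv S x := fun x =>
    mul_nonneg (rpow_nonneg (abs_nonneg _) _) (hg0 _)
  have hellm : Measurable (ellDensity g μv S) := (hgm.comp hqm).const_mul _
  have hEφ : ∀ (i : ℕ) (ψf : (Fin d → ℝ) → ℝ), Measurable ψf →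
      (∫ ω, ψf (X i ω) ∂P) = ∫ x, ψf x * ellDensity g μv S x := by
    intro i ψf hψ
    rw [← integral_map (hXm i).aemeasurable hψ.aestronglyMeasurable, hident i]
    have hofReal : (fun x => ENNReal.ofReal (ellDensity g μv S x))
        = fun x => (((ellDensity g μv S x).toNNReal : NNReal) : ENNReal) := rfl
    rw [hofReal, integral_withDensity_eq_integral_smul hellm.real_toNNReal ψf]
    refine integral_congr_ae (Filter.Eventually.of_forall fun x => ?_)
    show (ellDensity g μv S x).toNNReal • ψf x = ψf x * ellDensity g μv S x
    rw [NNReal.smul_def, Real.coe_toNNReal _ (hellnn x), smul_eq_mul, mul_comm]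
  have hsubst : ∀ F : ℝ → ℝ, Measurable F →
      (∫ x : Fin d → ℝ, F ((u0 - psi d a (quadForm μv S x))/(h n)) *
          ellDensity g μv S x)
        = sd d * (h n * ∫ w : ℝ, F w * ρb (u0 - h n * w)) := by
    intro F hF
    have hGm : Measurable fun t : ℝ => F ((u0 - psi d a t)/(h n)) :=
      hF.comp ((measurable_const.sub hpsim).div_const _)
    have hstep : (∫ x : Fin d → ℝ, F ((u0 - psi d a (quadForm μv S x))/(h n)) *
        ellDensity g μv S x)
        = sd d * ∫ t in Set.Ioi (0:ℝ), F ((u0 - psi d a t)/(h n)) * gtilde d g t :=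
      radial_integral hd g hgm μv hS (fun t => F ((u0 - psi d a t)/(h n))) hGm
    have h2 : (∫ t in Set.Ioi (0:ℝ), F ((u0 - psi d a t)/(h n)) * gtilde d g t)
        = ∫ u in Set.Ioi (0:ℝ), F ((u0 - u)/(h n)) * rho d a g u :=
      (psi_subst hd ha g (fun u => F ((u0 - u)/(h n)))).symm
    have h3 : (∫ u in Set.Ioi (0:ℝ), F ((u0 - u)/(h n)) * rho d a g u)
        = h n * ∫ w : ℝ, F w * ρb (u0 - h n * w) :=
      comp_affine F hhp u0 (rho d a g)
    rw [hstep, h2, h3]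
  -- compute the moments
  have hE1 : (∫ ω, F1 (quadForm μv S (X 0 ω)) ∂P) = sd d * (h n * B0 n) := by
    rw [hEφ 0 _ hφm, hsubst Kk hKm]
  have hE2 : (∫ ω, (F1 (quadForm μv S (X 0 ω)))^2 ∂P) = sd d * (h n * B1 n) := by
    have h1 := hEφ 0 (fun x => (F1 (quadForm μv S x))^2) (by
      rw [show (fun x => (F1 (quadForm μv S x))^2) = fun x =>
        F1 (quadForm μv S x) * F1 (quadForm μv S x) from by funext x; ring]
      exact hφm.mul hφm)
    rw [h1]
    exact hsubst (fun w => (Kk w)^2) hK2m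
  -- all summands have the same moments
  have hE1i : ∀ i, (∫ ω, F1 (quadForm μv S (X i ω)) ∂P) = sd d * (h n * B0 n) := by
    intro i
    rw [hEφ i _ hφm, hsubst Kk hKm]
  have hE2i : ∀ i, (∫ ω, (F1 (quadForm μv S (X i ω)))^2 ∂P) = sd d * (h n * B1 n) := by
    intro i
    have h1 := hEφ i (fun x => (F1 (quadForm μv S x))^2) (by
      rw [show (fun x => (F1 (quadForm μv S x))^2) = fun x =>
        F1 (quadForm μv S x) * F1 (quadForm μv S x) from by funext x; ring]
      exact hφm.mul hφm)
    rw [h1]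
    exact hsubst (fun w => (Kk w)^2) hK2m
  have hVar : ∀ i, ProbabilityTheory.variance (fun ω => F1 (quadForm μv S (X i ω))) P
      = sd d * (h n * B1 n) - (sd d * (h n * B0 n))^2 := by
    intro i
    rw [ProbabilityTheory.variance_eq_sub (hmem2 i)]
    have h1 : (fun ω => F1 (quadForm μv S (X i ω)))^2
        = fun ω => (F1 (quadForm μv S (X i ω)))^2 := by
      funext ω; simp
    rw [h1, hE2i i, hE1i i]
  have hVarSum : ProbabilityTheory.variance
      (fun ω => ∑ i ∈ Finset.range n, F1 (quadForm μv S (X i ω))) P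
      = n * (sd d * (h n * B1 n) - (sd d * (h n * B0 n))^2) := by
    have hps : (fun ω => ∑ i ∈ Finset.range n, F1 (quadForm μv S (X i ω)))
        = ∑ i ∈ Finset.range n, (fun ω => F1 (quadForm μv S (X i ω))) := by
      funext ω; simp
    rw [hps, ProbabilityTheory.IndepFun.variance_sum (fun i _ => hmem2 i)
      (fun i _ j _ hij => (hindep.indepFun hij).comp hφm hφm)]
    rw [Finset.sum_congr rfl (fun i _ => hVar i), Finset.sum_const, Finset.card_range,
      nsmul_eq_mul]
  have hVarEta : ProbabilityTheory.variance (etahat d k a Kk μv S X n (h n) ξ) P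
      = (1/((n:ℝ) * h n ^(k+1) * sd d))^2 *
        ((n:ℝ) * (sd d * (h n * B1 n) - (sd d * (h n * B0 n))^2)) := by
    rw [hetahat, ProbabilityTheory.variance_const_mul, hVarSum]
  rw [hVarEta]
  have hhne : h n ≠ 0 := hhp.ne'
  have hnne : (n:ℝ) ≠ 0 := hn0.ne'
  have hsdne : sd d ≠ 0 := hsd.ne'
  field_simp
  ring
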